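/- Consider system (3.1) with all parameters positive, c₁q₁ − a₁μ₁ > 0, c₂q₂ − a₂μ₂ > 0, and thresholds y^b = μ₁/(c₁q₁ − a₁μ₁), z^b = μ₂/(c₂q₂ − a₂μ₂) both lying in the open interval (K/2, K). If system (3.1) has a positive equilibrium E* = (x*, y*, z*), then E* is the unique positive equilibrium, and every eigenvalue of the Jacobian matrix of the vector field of (3.1) at E* has negative real part; in particular E* is a local attractor. -/

import Mathlib

lemma cubic_re_neg (a b c : ℝ) (ha : 0 < a) (hb : 0 < b) (hc : 0 < c)
    (hab : c < a * b) (z : ℂ) (hz : z ^ 3 + (a : ℂ) * z ^ 2 + (b : ℂ) * z + (c : ℂ) = 0) :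
    z.re < 0 := by
  have hre := congrArg Complex.re hz
  have him := congrArg Complex.im hz
  simp only [Complex.add_re, Complex.add_im, Complex.mul_re, Complex.mul_im,
    Complex.ofReal_re, Complex.ofReal_im, Complex.zero_re, Complex.zero_im,
    pow_succ, pow_zero, one_mul, Complex.one_re, Complex.one_im] at hre him
  by_contra hge
  push_neg at hge
  rcases eq_or_ne z.im 0 with h0 | h0
  · rw [h0] at hre
    nlinarith [mul_nonneg (mul_nonneg hge hge) hge, mul_nonneg hge hge]
  · have him' : z.im * (3 * z.re ^ 2 + 2 * a * z.re + b - z.im ^ 2) = 0 := by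
      nlinarith [him]
    have hv2 : z.im ^ 2 = 3 * z.re ^ 2 + 2 * a * z.re + b := by
      rcases mul_eq_zero.mp him' with h | h
      · exact absurd h h0
      · linarith
    nlinarith [hre, hv2, mul_nonneg (mul_nonneg hge hge) hge, mul_nonneg hge hge,
      mul_nonneg (mul_nonneg hge hge) ha.le, mul_nonneg hge hb.le, mul_nonneg hge (sq_nonneg a)]

lemma Gmono (q m a α μ K yb x₁ x₂ : ℝ) (hq : 0 < q) (hm : 0 < m) (ha : 0 < a)
    (hα : 0 < α) (hμ : 0 < μ) (hx₁ : 0 < x₁) (hlt : x₁ < x₂) (hx₂K : x₂ < K)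
    (hK2 : K < 2 * yb) (hmu : μ = yb * α) :
    q * (α * x₁ - μ) / (m * (1 + a * x₁) ^ 2) < q * (α * x₂ - μ) / (m * (1 + a * x₂) ^ 2) := by
  have d1 : 0 < 1 + a * x₁ := by nlinarith [mul_pos ha hx₁]
  have d2 : 0 < 1 + a * x₂ := by nlinarith [mul_pos ha hx₁]
  rw [div_lt_div_iff₀ (mul_pos hm (pow_pos d1 2)) (mul_pos hm (pow_pos d2 2))]
  have h1 : 0 < x₂ - x₁ := by linarith
  have h2 : 0 < 2 * yb - x₂ := by linarith
  have hyb0 : 0 < yb := by linarith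
  have hbr : 0 < α + 2 * a * μ + a ^ 2 * μ * (x₁ + x₂) - a ^ 2 * α * (x₁ * x₂) := by
    have k1 : 0 < a ^ 2 * α * (x₁ * (2 * yb - x₂)) :=
      mul_pos (mul_pos (pow_pos ha 2) hα) (mul_pos hx₁ h2)
    have k2 : 0 ≤ a ^ 2 * α * (yb * (x₂ - x₁)) := by positivity
    subst hmu
    nlinarith [mul_pos (mul_pos ha hα) hyb0]
  nlinarith [mul_pos (mul_pos hq hm) (mul_pos h1 hbr)]


lemma Apos_aux (r W P₁ P₂ Q₁ Q₂ R₁ R₂ : ℝ) (hr : 0 < r) (hW : 1 / 2 < W)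
    (h1 : r * (1 - W) - P₁ - P₂ = 0) (hu1 : Q₁ = P₁ - R₁) (hu2 : Q₂ = P₂ - R₂)
    (hv1 : R₁ < P₁) (hv2 : R₂ < P₂) : r * (1 - 2 * W) - Q₁ - Q₂ < 0 := by
  nlinarith only [hr, hW, h1, hu1, hu2, hv1, hv2, mul_pos hr (by linarith : (0:ℝ) < 2 * W - 1)]

set_option maxHeartbeats 1000000 in
theorem statement10
    (r K q₁ q₂ a₁ a₂ c₁ c₂ μ₁ μ₂ m₁ m₂ : ℝ)
    (hr : 0 < r) (hK : 0 < K) (hq₁ : 0 < q₁) (hq₂ : 0 < q₂)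
    (ha₁ : 0 < a₁) (ha₂ : 0 < a₂) (hc₁ : 0 < c₁) (hc₂ : 0 < c₂)
    (hμ₁ : 0 < μ₁) (hμ₂ : 0 < μ₂) (hm₁ : 0 < m₁) (hm₂ : 0 < m₂)
    (hden₁ : 0 < c₁ * q₁ - a₁ * μ₁) (hden₂ : 0 < c₂ * q₂ - a₂ * μ₂)
    (yb zb : ℝ)
    (hyb : yb = μ₁ / (c₁ * q₁ - a₁ * μ₁))
    (hzb : zb = μ₂ / (c₂ * q₂ - a₂ * μ₂))
    (hyb' : yb ∈ Set.Ioo (K / 2) K) (hzb' : zb ∈ Set.Ioo (K / 2) K)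
    -- the positive equilibrium E* = (x*, y*, z*)
    (xs ys zs : ℝ) (hxs : 0 < xs) (hys : 0 < ys) (hzs : 0 < zs)
    (heq1 : r * (1 - xs / K) - q₁ * ys / (1 + a₁ * xs)
      - q₂ * zs / (1 + a₂ * xs) = 0)
    (heq2 : c₁ * q₁ * xs / (1 + a₁ * xs) - μ₁ - m₁ * ys = 0)
    (heq3 : c₂ * q₂ * xs / (1 + a₂ * xs) - μ₂ - m₂ * zs = 0) :
    (∀ x y z : ℝ, 0 < x → 0 < y → 0 < z →
      r * (1 - x / K) - q₁ * y / (1 + a₁ * x) - q₂ * z / (1 + a₂ * x) = 0 →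
      c₁ * q₁ * x / (1 + a₁ * x) - μ₁ - m₁ * y = 0 →
      c₂ * q₂ * x / (1 + a₂ * x) - μ₂ - m₂ * z = 0 →
      x = xs ∧ y = ys ∧ z = zs) ∧
    ∀ lam : ℂ, lam ∈ spectrum ℂ
      ((!![r * (1 - 2 * xs / K) - q₁ * ys / (1 + a₁ * xs) ^ 2
              - q₂ * zs / (1 + a₂ * xs) ^ 2,
            -(q₁ * xs / (1 + a₁ * xs)), -(q₂ * xs / (1 + a₂ * xs));
          c₁ * q₁ * ys / (1 + a₁ * xs) ^ 2,
            c₁ * q₁ * xs / (1 + a₁ * xs) - μ₁ - 2 * m₁ * ys, 0;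
          c₂ * q₂ * zs / (1 + a₂ * xs) ^ 2, 0,
            c₂ * q₂ * xs / (1 + a₂ * xs) - μ₂ - 2 * m₂ * zs] :
          Matrix (Fin 3) (Fin 3) ℝ).map (Complex.ofReal ·)) →
      lam.re < 0 := by
  have hd1s : 0 < 1 + a₁ * xs := by nlinarith [mul_pos ha₁ hxs]
  have hd2s : 0 < 1 + a₂ * xs := by nlinarith [mul_pos ha₂ hxs]
  have hmu1 : μ₁ = yb * (c₁ * q₁ - a₁ * μ₁) := by
    rw [hyb, div_mul_cancel₀ _ hden₁.ne']
  have hmu2 : μ₂ = zb * (c₂ * q₂ - a₂ * μ₂) := by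
    rw [hzb, div_mul_cancel₀ _ hden₂.ne']
  have hK2y : K < 2 * yb := by have := hyb'.1; linarith
  have hK2z : K < 2 * zb := by have := hzb'.1; linarith
  -- star relations
  have hys' : m₁ * ys * (1 + a₁ * xs) = (c₁ * q₁ - a₁ * μ₁) * xs - μ₁ := by
    field_simp at heq2
    linarith only [heq2]
  have hzs' : m₂ * zs * (1 + a₂ * xs) = (c₂ * q₂ - a₂ * μ₂) * xs - μ₂ := by
    field_simp at heq3
    linarith only [heq3]
  have hxsyb : yb < xs := by
    have key : 0 < (c₁ * q₁ - a₁ * μ₁) * xs - μ₁ :=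
      hys' ▸ mul_pos (mul_pos hm₁ hys) hd1s
    have h2 : yb * (c₁ * q₁ - a₁ * μ₁) < xs * (c₁ * q₁ - a₁ * μ₁) := by linarith
    exact (mul_lt_mul_iff_of_pos_right hden₁).mp h2
  have hxsK : xs < K := by
    have hp : 0 < q₁ * ys / (1 + a₁ * xs) + q₂ * zs / (1 + a₂ * xs) :=
      add_pos (div_pos (mul_pos hq₁ hys) hd1s) (div_pos (mul_pos hq₂ hzs) hd2s)
    have h1 : 0 < r * (1 - xs / K) := by linarith only [heq1, hp]
    have h2 : 0 < 1 - xs / K := by nlinarith only [h1, hr]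
    exact (div_lt_one hK).mp (by linarith only [h2])
  have t1s : q₁ * ys / (1 + a₁ * xs)
      = q₁ * ((c₁ * q₁ - a₁ * μ₁) * xs - μ₁) / (m₁ * (1 + a₁ * xs) ^ 2) := by
    rw [div_eq_div_iff hd1s.ne' (by positivity)]
    linear_combination (q₁ * (1 + a₁ * xs)) * hys'
  have t2s : q₂ * zs / (1 + a₂ * xs)
      = q₂ * ((c₂ * q₂ - a₂ * μ₂) * xs - μ₂) / (m₂ * (1 + a₂ * xs) ^ 2) := by
    rw [div_eq_div_iff hd2s.ne' (by positivity)]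
    linear_combination (q₂ * (1 + a₂ * xs)) * hzs'
  have hstar1 : r * (1 - xs / K)
      = q₁ * ((c₁ * q₁ - a₁ * μ₁) * xs - μ₁) / (m₁ * (1 + a₁ * xs) ^ 2)
        + q₂ * ((c₂ * q₂ - a₂ * μ₂) * xs - μ₂) / (m₂ * (1 + a₂ * xs) ^ 2) := by
    rw [← t1s, ← t2s]; linarith only [heq1]
  constructor
  · -- uniqueness
    intro x y z hx hy hz e1 e2 e3
    have hd1 : 0 < 1 + a₁ * x := by nlinarith [mul_pos ha₁ hx]
    have hd2 : 0 < 1 + a₂ * x := by nlinarith [mul_pos ha₂ hx]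
    have hy' : m₁ * y * (1 + a₁ * x) = (c₁ * q₁ - a₁ * μ₁) * x - μ₁ := by
      field_simp at e2
      linarith only [e2]
    have hz' : m₂ * z * (1 + a₂ * x) = (c₂ * q₂ - a₂ * μ₂) * x - μ₂ := by
      field_simp at e3
      linarith only [e3]
    have hxK : x < K := by
      have hp : 0 < q₁ * y / (1 + a₁ * x) + q₂ * z / (1 + a₂ * x) :=
        add_pos (div_pos (mul_pos hq₁ hy) hd1) (div_pos (mul_pos hq₂ hz) hd2)
      have h1 : 0 < r * (1 - x / K) := by linarith only [e1, hp]
      have h2 : 0 < 1 - x / K := by nlinarith only [h1, hr]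
      exact (div_lt_one hK).mp (by linarith only [h2])
    have t1 : q₁ * y / (1 + a₁ * x)
        = q₁ * ((c₁ * q₁ - a₁ * μ₁) * x - μ₁) / (m₁ * (1 + a₁ * x) ^ 2) := by
      rw [div_eq_div_iff hd1.ne' (by positivity)]
      linear_combination (q₁ * (1 + a₁ * x)) * hy'
    have t2 : q₂ * z / (1 + a₂ * x)
        = q₂ * ((c₂ * q₂ - a₂ * μ₂) * x - μ₂) / (m₂ * (1 + a₂ * x) ^ 2) := by
      rw [div_eq_div_iff hd2.ne' (by positivity)]
      linear_combination (q₂ * (1 + a₂ * x)) * hz'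
    have hx1 : r * (1 - x / K)
        = q₁ * ((c₁ * q₁ - a₁ * μ₁) * x - μ₁) / (m₁ * (1 + a₁ * x) ^ 2)
          + q₂ * ((c₂ * q₂ - a₂ * μ₂) * x - μ₂) / (m₂ * (1 + a₂ * x) ^ 2) := by
      rw [← t1, ← t2]; linarith only [e1]
    have hxeq : x = xs := by
      rcases lt_trichotomy x xs with h | h | h
      · exfalso
        have g1 := Gmono q₁ m₁ a₁ (c₁ * q₁ - a₁ * μ₁) μ₁ K yb x xs hq₁ hm₁ ha₁
          hden₁ hμ₁ hx h hxsK hK2y hmu1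
        have g2 := Gmono q₂ m₂ a₂ (c₂ * q₂ - a₂ * μ₂) μ₂ K zb x xs hq₂ hm₂ ha₂
          hden₂ hμ₂ hx h hxsK hK2z hmu2
        have hr1 : r * (1 - xs / K) < r * (1 - x / K) := by
          have hdiv : x / K < xs / K := by
            rw [div_lt_div_iff₀ hK hK]
            exact mul_lt_mul_of_pos_right h hK
          exact mul_lt_mul_of_pos_left (by linarith only [hdiv]) hr
        linarith only [hx1, hstar1, g1, g2, hr1]
      · exact h
      · exfalso
        have g1 := Gmono q₁ m₁ a₁ (c₁ * q₁ - a₁ * μ₁) μ₁ K yb xs x hq₁ hm₁ ha₁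
          hden₁ hμ₁ hxs h hxK hK2y hmu1
        have g2 := Gmono q₂ m₂ a₂ (c₂ * q₂ - a₂ * μ₂) μ₂ K zb xs x hq₂ hm₂ ha₂
          hden₂ hμ₂ hxs h hxK hK2z hmu2
        have hr1 : r * (1 - x / K) < r * (1 - xs / K) := by
          have hdiv : xs / K < x / K := by
            rw [div_lt_div_iff₀ hK hK]
            exact mul_lt_mul_of_pos_right h hK
          exact mul_lt_mul_of_pos_left (by linarith only [hdiv]) hr
        linarith only [hx1, hstar1, g1, g2, hr1]
    subst hxeq
    refine ⟨rfl, ?_, ?_⟩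
    · have h' : m₁ * y * (1 + a₁ * x) = m₁ * ys * (1 + a₁ * x) := by
        linear_combination hy' - hys'
      have h'' : m₁ * y = m₁ * ys := mul_right_cancel₀ hd1.ne' h'
      exact mul_left_cancel₀ hm₁.ne' h''
    · have h' : m₂ * z * (1 + a₂ * x) = m₂ * zs * (1 + a₂ * x) := by
        linear_combination hz' - hzs'
      have h'' : m₂ * z = m₂ * zs := mul_right_cancel₀ hd2.ne' h'
      exact mul_left_cancel₀ hm₂.ne' h''
  · -- eigenvalues
    intro lam hlam
    obtain ⟨A, hA⟩ : ∃ t : ℝ, t = -(r * (1 - 2 * xs / K) - q₁ * ys / (1 + a₁ * xs) ^ 2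
        - q₂ * zs / (1 + a₂ * xs) ^ 2) := ⟨_, rfl⟩
    obtain ⟨B, hB⟩ : ∃ t : ℝ, t = q₁ * xs / (1 + a₁ * xs) := ⟨_, rfl⟩
    obtain ⟨C, hC⟩ : ∃ t : ℝ, t = q₂ * xs / (1 + a₂ * xs) := ⟨_, rfl⟩
    obtain ⟨D, hD⟩ : ∃ t : ℝ, t = c₁ * q₁ * ys / (1 + a₁ * xs) ^ 2 := ⟨_, rfl⟩
    obtain ⟨E, hE⟩ : ∃ t : ℝ, t = m₁ * ys := ⟨_, rfl⟩
    obtain ⟨F, hF⟩ : ∃ t : ℝ, t = c₂ * q₂ * zs / (1 + a₂ * xs) ^ 2 := ⟨_, rfl⟩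
    obtain ⟨G, hG⟩ : ∃ t : ℝ, t = m₂ * zs := ⟨_, rfl⟩
    -- rewrite the matrix entries
    have e11 : r * (1 - 2 * xs / K) - q₁ * ys / (1 + a₁ * xs) ^ 2
        - q₂ * zs / (1 + a₂ * xs) ^ 2 = -A := by rw [hA]; ring
    have e12 : -(q₁ * xs / (1 + a₁ * xs)) = -B := by rw [hB]
    have e13 : -(q₂ * xs / (1 + a₂ * xs)) = -C := by rw [hC]
    have e21 : c₁ * q₁ * ys / (1 + a₁ * xs) ^ 2 = D := hD.symm
    have e22 : c₁ * q₁ * xs / (1 + a₁ * xs) - μ₁ - 2 * m₁ * ys = -E := by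
      rw [hE]; linear_combination heq2
    have e31 : c₂ * q₂ * zs / (1 + a₂ * xs) ^ 2 = F := hF.symm
    have e33 : c₂ * q₂ * xs / (1 + a₂ * xs) - μ₂ - 2 * m₂ * zs = -G := by
      rw [hG]; linear_combination heq3
    rw [e11, e12, e13, e21, e22, e31, e33] at hlam
    -- positivity of the coefficients
    have hBpos : 0 < B := hB ▸ div_pos (mul_pos hq₁ hxs) hd1s
    have hCpos : 0 < C := hC ▸ div_pos (mul_pos hq₂ hxs) hd2s
    have hDpos : 0 < D := hD ▸ div_pos (mul_pos (mul_pos hc₁ hq₁) hys) (pow_pos hd1s 2)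
    have hEpos : 0 < E := hE ▸ mul_pos hm₁ hys
    have hFpos : 0 < F := hF ▸ div_pos (mul_pos (mul_pos hc₂ hq₂) hzs) (pow_pos hd2s 2)
    have hGpos : 0 < G := hG ▸ mul_pos hm₂ hzs
    have hApos : 0 < A := by
      rw [hA, neg_pos]
      have u1 : q₁ * ys / (1 + a₁ * xs) ^ 2
          = q₁ * ys / (1 + a₁ * xs) - q₁ * ys * (a₁ * xs) / (1 + a₁ * xs) ^ 2 := by
        field_simp
        ring
      have u2 : q₂ * zs / (1 + a₂ * xs) ^ 2
          = q₂ * zs / (1 + a₂ * xs) - q₂ * zs * (a₂ * xs) / (1 + a₂ * xs) ^ 2 := by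
        field_simp
        ring
      have v1 : q₁ * ys * (a₁ * xs) / (1 + a₁ * xs) ^ 2 < q₁ * ys / (1 + a₁ * xs) := by
        rw [div_lt_div_iff₀ (pow_pos hd1s 2) hd1s]
        nlinarith only [mul_pos (mul_pos hq₁ hys) hd1s]
      have v2 : q₂ * zs * (a₂ * xs) / (1 + a₂ * xs) ^ 2 < q₂ * zs / (1 + a₂ * xs) := by
        rw [div_lt_div_iff₀ (pow_pos hd2s 2) hd2s]
        nlinarith only [mul_pos (mul_pos hq₂ hzs) hd2s]
      have hW : 1 / 2 < xs / K := by
        rw [lt_div_iff₀ hK]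
        have h2 : K / 2 < xs := lt_trans hyb'.1 hxsyb
        linarith only [h2]
      have key := Apos_aux r (xs / K) (q₁ * ys / (1 + a₁ * xs)) (q₂ * zs / (1 + a₂ * xs))
        (q₁ * ys / (1 + a₁ * xs) ^ 2) (q₂ * zs / (1 + a₂ * xs) ^ 2)
        (q₁ * ys * (a₁ * xs) / (1 + a₁ * xs) ^ 2) (q₂ * zs * (a₂ * xs) / (1 + a₂ * xs) ^ 2)
        hr hW heq1 u1 u2 v1 v2
      have hdd : r * (1 - 2 * (xs / K)) = r * (1 - 2 * xs / K) := by ring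
      linarith only [key, hdd]
    -- extract the characteristic polynomial
    rw [spectrum.mem_iff] at hlam
    have hdet : (algebraMap ℂ (Matrix (Fin 3) (Fin 3) ℂ) lam
        - (!![-A, -B, -C; D, -E, 0; F, 0, -G] : Matrix (Fin 3) (Fin 3) ℝ).map
          (Complex.ofReal ·)).det = 0 := by
      by_contra h
      exact hlam ((Matrix.isUnit_iff_isUnit_det _).mpr (isUnit_iff_ne_zero.mpr h))
    simp [Matrix.det_fin_three, Matrix.algebraMap_matrix_apply, Matrix.sub_apply,
      Matrix.map_apply] at hdet
    have hcubic : lam ^ 3 + ((A + E + G : ℝ) : ℂ) * lam ^ 2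
        + ((A * E + A * G + E * G + B * D + C * F : ℝ) : ℂ) * lam
        + ((A * E * G + B * D * G + C * F * E : ℝ) : ℂ) = 0 := by
      push_cast
      linear_combination hdet
    refine cubic_re_neg _ _ _ ?_ ?_ ?_ ?_ lam hcubic
    · linarith only [hApos, hEpos, hGpos]
    · nlinarith only [mul_pos hApos hEpos, mul_pos hApos hGpos, mul_pos hEpos hGpos,
        mul_pos hBpos hDpos, mul_pos hCpos hFpos]
    · nlinarith only [mul_pos (mul_pos hApos hEpos) hGpos, mul_pos (mul_pos hBpos hDpos) hGpos,
        mul_pos (mul_pos hCpos hFpos) hEpos]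
    · nlinarith only [mul_pos (mul_pos hApos hApos) hEpos, mul_pos (mul_pos hApos hApos) hGpos,
        mul_pos (mul_pos hApos hEpos) hEpos, mul_pos (mul_pos hApos hGpos) hGpos,
        mul_pos (mul_pos hEpos hEpos) hGpos, mul_pos (mul_pos hEpos hGpos) hGpos,
        mul_pos (mul_pos hApos hEpos) hGpos, mul_pos (mul_pos hApos hBpos) hDpos,
        mul_pos (mul_pos hEpos hBpos) hDpos, mul_pos (mul_pos hApos hCpos) hFpos,
        mul_pos (mul_pos hGpos hCpos) hFpos]
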